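/- With Ψ := Δ_1 δ_2/q_1 + Δ_2 δ_1/q_2, if Ψ = 1 then the point P_{B_1} = (q_2(q_1 - Δ_1 δ_2)²/(Δ_2 q_1), Δ_1 δ_2² q_2 / q_1) equals the point P_{B_2} = (Δ_2 δ_1² q_1 / q_2, q_1(q_2 - Δ_2 δ_1)²/(Δ_1 q_2)), and both equal P_{B_3} = (δ_1(q_1 - Δ_1 δ_2), δ_2(q_2 - Δ_2 δ_1)). -/

import Mathlib

/-- If `Ψ = Δ₁δ₂/q₁ + Δ₂δ₁/q₂ = 1`, the corner points `P_{B₁}`, `P_{B₂}` and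
`P_{B₃}` all coincide. -/
theorem stmt_5 (q1 q2 D1 D2 d1 d2 : ℝ) (hq1 : 0 < q1) (hq2 : 0 < q2)
    (hD1 : 0 < D1) (hD2 : 0 < D2) (hD1' : D1 < q1) (hD2' : D2 < q2)
    (hd1 : 0 < d1) (hd1' : d1 ≤ 1) (hd2 : 0 < d2) (hd2' : d2 ≤ 1)
    (hPsi : D1 * d2 / q1 + D2 * d1 / q2 = 1) :
    ((q2 * (q1 - D1 * d2) ^ 2 / (D2 * q1), D1 * d2 ^ 2 * q2 / q1)
        = (D2 * d1 ^ 2 * q1 / q2, q1 * (q2 - D2 * d1) ^ 2 / (D1 * q2))) ∧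
      ((q2 * (q1 - D1 * d2) ^ 2 / (D2 * q1), D1 * d2 ^ 2 * q2 / q1)
        = (d1 * (q1 - D1 * d2), d2 * (q2 - D2 * d1))) := by
  have hq1' := hq1.ne'
  have hq2' := hq2.ne'
  have hR : D1 * d2 * q2 + D2 * d1 * q1 = q1 * q2 := by
    field_simp at hPsi; linarith
  have h1 : q2 * (q1 - D1 * d2) = D2 * d1 * q1 := by linarith
  have h2 : q1 * (q2 - D2 * d1) = D1 * d2 * q2 := by linarith
  refine ⟨Prod.ext ?_ ?_, Prod.ext ?_ ?_⟩ <;> simp only [Prod.fst, Prod.snd] <;>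
    field_simp
  · linear_combination (q2 * (q1 - D1 * d2) + D2 * d1 * q1) * h1
  · linear_combination (-(q1 * (q2 - D2 * d1)) - D1 * d2 * q2) * h2
  · linear_combination (q1 - D1 * d2) * h1
  · linear_combination hR
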